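/- arXiv:2605.12947 — 5 statements merged into one kernel-verified Lean document; each statement's English description precedes it below -/
import Mathlib

section
/- Let (p_t)_{t≥1} be a sequence of [0,1]-valued random variables adapted to a filtration (G_t), and let c_t ∈ [0,1] be deterministic constants such that P(p_t ≤ α ∣ G_{t−1}) ≥ c_t almost surely for all t. Define τ = inf{t ≥ 1 : p_t ≤ α}. Then for every T ∈ ℕ, P(τ ≤ T) ≥ 1 − exp(−∑_{t=1}^T c_t). -/
open MeasureTheory

/-- Failure of naive stopping: finite-horizon lower bound on the probability that
the naive thresholding rule stops by time `T`. -/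
theorem stmt_1 {Ω : Type*} {m0 : MeasurableSpace Ω} (μ : Measure Ω) [IsProbabilityMeasure μ]
    (𝒢 : Filtration ℕ m0) (p : ℕ → Ω → ℝ) (hadapt : Adapted 𝒢 p)
    (α : ℝ) (hα : α ∈ Set.Ioo (0:ℝ) 1)
    (hp01 : ∀ t ω, p t ω ∈ Set.Icc (0:ℝ) 1)
    (c : ℕ → ℝ) (hc : ∀ t, c t ∈ Set.Icc (0:ℝ) 1)
    (hcond : ∀ t, 1 ≤ t → ∀ᵐ ω ∂μ,
      c t ≤ (μ[Set.indicator {ω' | p t ω' ≤ α} (fun _ => (1:ℝ)) | 𝒢 (t-1)]) ω)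
    (T : ℕ) :
    1 - Real.exp (-(∑ t ∈ Finset.Icc 1 T, c t))
      ≤ (μ {ω | ∃ t ∈ Finset.Icc 1 T, p t ω ≤ α}).toReal := by
  classical
  set A : ℕ → Set Ω := fun t => {ω | p t ω ≤ α} with hA
  have hA_meas : ∀ t, MeasurableSet[𝒢 t] (A t) := fun t =>
    (hadapt t) measurableSet_Iic
  have hA_meas0 : ∀ t, MeasurableSet (A t) := fun t => 𝒢.le t _ (hA_meas t)
  set S : ℕ → Set Ω := fun T => ⋂ t ∈ Finset.Icc 1 T, (A t)ᶜ with hS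
  have hS_meas : ∀ T, MeasurableSet[𝒢 T] (S T) := by
    intro T
    refine MeasurableSet.biInter (Finset.Icc 1 T : Finset ℕ).countable_toSet ?_
    intro t ht
    exact 𝒢.mono (Finset.mem_Icc.mp ht).2 _ (hA_meas t).compl
  have hS_meas0 : ∀ T, MeasurableSet (S T) := fun T => 𝒢.le T _ (hS_meas T)
  have hne : ∀ s : Set Ω, μ s ≠ ⊤ := fun s => measure_ne_top μ s
  -- step inequality
  have hstep : ∀ T : ℕ, (μ (S (T+1))).toReal ≤ (1 - c (T+1)) * (μ (S T)).toReal := by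
    intro T
    have hins : Finset.Icc 1 (T+1) = insert (T+1) (Finset.Icc 1 T) := by
      rw [(Finset.insert_Icc_right_eq_Icc_add_one (by omega : 1 ≤ T+1)).symm]
    have hSsucc : S (T+1) = S T ∩ (A (T+1))ᶜ := by
      simp only [hS, hins, Finset.set_biInter_insert]
      exact Set.inter_comm _ _
    have hsplit : μ (S T ∩ A (T+1)) + μ (S T ∩ (A (T+1))ᶜ) = μ (S T) := by
      have := measure_inter_add_diff (μ := μ) (S T) (hA_meas0 (T+1))
      simpa [Set.diff_eq] using this
    -- lower bound on μ (S T ∩ A (T+1))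
    have hint : Integrable (Set.indicator (A (T+1)) (fun _ => (1:ℝ))) μ :=
      (integrable_const (1:ℝ)).indicator (hA_meas0 (T+1))
    have hkey : c (T+1) * (μ (S T)).toReal ≤ (μ (S T ∩ A (T+1))).toReal := by
      have h1 : ∫ ω in S T, (μ[Set.indicator (A (T+1)) (fun _ => (1:ℝ)) | 𝒢 T]) ω ∂μ
          = ∫ ω in S T, Set.indicator (A (T+1)) (fun _ => (1:ℝ)) ω ∂μ :=
        setIntegral_condExp (𝒢.le T) hint (hS_meas T)
      have h2 : ∫ ω in S T, Set.indicator (A (T+1)) (fun _ => (1:ℝ)) ω ∂μ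
          = (μ (S T ∩ A (T+1))).toReal := by
        rw [integral_indicator_const (1:ℝ) (hA_meas0 (T+1)), measureReal_def,
          Measure.restrict_apply (hA_meas0 (T+1)), Set.inter_comm]
        simp
      have hcond' := hcond (T+1) (by omega)
      simp only [Nat.add_sub_cancel] at hcond'
      have h3 : ∫ ω in S T, c (T+1) ∂μ
          ≤ ∫ ω in S T, (μ[Set.indicator (A (T+1)) (fun _ => (1:ℝ)) | 𝒢 T]) ω ∂μ := by
        refine setIntegral_mono_ae (integrableOn_const (hne _))
          integrable_condExp.integrableOn ?_
        exact hcond'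
      have h4 : ∫ ω in S T, c (T+1) ∂μ = (μ (S T)).toReal * c (T+1) := by
        rw [setIntegral_const]; simp [smul_eq_mul, measureReal_def]
      nlinarith [h3, h1.symm ▸ h3]
    have hfin1 := hne (S T ∩ A (T+1))
    have hfin2 := hne (S T ∩ (A (T+1))ᶜ)
    have htr : (μ (S T ∩ A (T+1))).toReal + (μ (S T ∩ (A (T+1))ᶜ)).toReal
        = (μ (S T)).toReal := by
      rw [← ENNReal.toReal_add hfin1 hfin2, hsplit]
    rw [hSsucc]
    nlinarith [htr, hkey, ENNReal.toReal_nonneg (a := μ (S T))]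
  -- induction: μ (S T) ≤ ∏ (1 - c t)
  have hprod : ∀ T : ℕ, (μ (S T)).toReal ≤ ∏ t ∈ Finset.Icc 1 T, (1 - c t) := by
    intro T
    induction T with
    | zero =>
      have h1 : (μ (S 0)).toReal ≤ (μ Set.univ).toReal :=
        ENNReal.toReal_mono (hne _) (measure_mono (Set.subset_univ _))
      simpa using h1
    | succ n ih =>
      have hins : Finset.Icc 1 (n+1) = insert (n+1) (Finset.Icc 1 n) := by
        rw [(Finset.insert_Icc_right_eq_Icc_add_one (by omega : 1 ≤ n+1)).symm]
      rw [hins, Finset.prod_insert (by simp)]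
      have h1c : (0:ℝ) ≤ 1 - c (n+1) := by have := (hc (n+1)).2; linarith
      calc (μ (S (n+1))).toReal ≤ (1 - c (n+1)) * (μ (S n)).toReal := hstep n
        _ ≤ (1 - c (n+1)) * ∏ t ∈ Finset.Icc 1 n, (1 - c t) := by
            exact mul_le_mul_of_nonneg_left ih h1c
  -- product ≤ exp(-sum)
  have hexp : ∏ t ∈ Finset.Icc 1 T, (1 - c t)
      ≤ Real.exp (-(∑ t ∈ Finset.Icc 1 T, c t)) := by
    rw [← Finset.sum_neg_distrib, Real.exp_sum]
    refine Finset.prod_le_prod (fun t _ => by have := (hc t).2; linarith) ?_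
    intro t _
    have := Real.add_one_le_exp (-(c t))
    linarith
  -- complement
  have hcompl : {ω | ∃ t ∈ Finset.Icc 1 T, p t ω ≤ α} = (S T)ᶜ := by
    ext ω
    simp [hS, hA]
  have hsum : (μ (S T)).toReal + (μ ((S T)ᶜ)).toReal = 1 := by
    rw [← ENNReal.toReal_add (hne _) (hne _), measure_add_measure_compl (hS_meas0 T)]
    simp
  rw [hcompl]
  have := hprod T
  linarith
end

section
/- Fix real numbers R_1, ..., R_n and a random variable S whose conditional upper-tail is dominated by the empirical tail of the pool: for every real s, P(S ≥ s) ≤ (1/n)·#{i : R_i ≥ s}. Define p = (1 + #{i : R_i ≥ S})/(n+1). Then for every u ∈ [0,1], P(p ≤ u) ≤ u. -/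
open MeasureTheory

/-- Stepwise validity under a conservative reference pool: the empirical
upper-tail rank p-value is super-uniform. -/
theorem stmt_4 {Ω : Type*} [MeasurableSpace Ω] (μ : Measure Ω) [IsProbabilityMeasure μ]
    (n : ℕ) (hn : 0 < n) (R : Fin n → ℝ) (S : Ω → ℝ) (hS : Measurable S)
    (hdom : ∀ s : ℝ, (μ {ω | s ≤ S ω}).toReal
      ≤ ((Finset.univ.filter fun i => s ≤ R i).card : ℝ) / n)
    (u : ℝ) (hu : u ∈ Set.Icc (0:ℝ) 1) :
    (μ {ω | (1 + ((Finset.univ.filter fun i => S ω ≤ R i).card : ℝ)) / (n+1) ≤ u}).toReal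
      ≤ u := by
  obtain ⟨hu0, hu1⟩ := hu
  set Nf : ℝ → ℕ := fun s => (Finset.univ.filter fun i => s ≤ R i).card with hNf
  set E : Set Ω := {ω | (1 + ((Finset.univ.filter fun i => S ω ≤ R i).card : ℝ)) / (n+1) ≤ u}
    with hE
  set k : ℕ := ⌊u * (n+1)⌋₊ with hk
  have hn1 : (0:ℝ) < n + 1 := by positivity
  have hkle : (k : ℝ) ≤ u * (n+1) := Nat.floor_le (by positivity)
  -- membership in E gives Nf (S ω) + 1 ≤ k
  have hmem : ∀ ω ∈ E, Nf (S ω) + 1 ≤ k := by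
    intro ω hω
    have h1 : (1 + (Nf (S ω) : ℝ)) ≤ u * (n+1) := by
      have := (div_le_iff₀ hn1).mp hω
      linarith
    have : ((Nf (S ω) + 1 : ℕ) : ℝ) ≤ u * (n+1) := by push_cast; linarith
    exact Nat.le_floor this
  by_cases hkn : n + 1 ≤ k
  · -- then u ≥ 1, trivial
    have h1u : (1:ℝ) ≤ u := by
      have : ((n:ℝ) + 1) ≤ u * (n+1) := le_trans (by exact_mod_cast hkn) hkle
      nlinarith
    calc (μ E).toReal ≤ 1 := by
          have := prob_le_one (μ := μ) (s := E)
          simpa using ENNReal.toReal_mono (by simp) this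
      _ ≤ u := h1u
  push_neg at hkn
  by_cases hk0 : k = 0
  · -- E is empty
    have : E = ∅ := by
      ext ω; simp only [Set.mem_empty_iff_false, iff_false]
      intro hω
      have := hmem ω hω
      omega
    rw [this]; simpa using hu0
  -- main case: 1 ≤ k ≤ n
  have hk1 : 1 ≤ k := Nat.one_le_iff_ne_zero.mpr hk0
  set m : ℕ := k - 1 with hm
  have hmn : m < n := by omega
  have hmk : m + 1 = k := by omega
  -- index type of rational thresholds with small tail count
  have hsub : E ⊆ ⋃ q : {q : ℚ // Nf (q:ℝ) ≤ m}, {ω | (q.1 : ℝ) ≤ S ω} := by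
    intro ω hω
    have hNm : Nf (S ω) ≤ m := by have := hmem ω hω; omega
    -- find a lower rational threshold with the same (or smaller) count
    have hex : ∃ r : ℝ, r < S ω ∧ ∀ i, R i < S ω → R i ≤ r := by
      rcases (Finset.univ.filter fun i => R i < S ω).eq_empty_or_nonempty with h | h
      · refine ⟨S ω - 1, by linarith, fun i hi => ?_⟩
        exfalso
        have hmem' : i ∈ Finset.univ.filter (fun i => R i < S ω) := by
          simp only [Finset.mem_filter, Finset.mem_univ, true_and]; exact hi
        rw [h] at hmem'
        exact Finset.notMem_empty i hmem' 
      · have hB : ((Finset.univ.filter fun i => R i < S ω).image R).Nonempty := h.image R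
        refine ⟨((Finset.univ.filter fun i => R i < S ω).image R).max' hB, ?_, ?_⟩
        · obtain ⟨j, hj, hjeq⟩ := Finset.mem_image.mp (Finset.max'_mem _ hB)
          rw [← hjeq]
          exact (Finset.mem_filter.mp hj).2
        · intro i hi
          exact Finset.le_max' _ _ (Finset.mem_image.mpr ⟨i, by simp [hi], rfl⟩)
    obtain ⟨r, hr1, hr2⟩ := hex
    obtain ⟨q, hq1, hq2⟩ := exists_rat_btwn hr1
    have hq : Nf (q:ℝ) ≤ m := by
      refine le_trans (le_trans (Finset.card_le_card ?_) (le_refl _)) hNm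
      intro i hi
      simp only [Finset.mem_filter, Finset.mem_univ, true_and] at hi ⊢
      by_contra hlt
      push_neg at hlt
      have := hr2 i hlt
      linarith
    exact Set.mem_iUnion.mpr ⟨⟨q, hq⟩, le_of_lt hq2⟩
  have hdir : Directed (· ⊆ ·) (fun q : {q : ℚ // Nf (q:ℝ) ≤ m} => {ω | (q.1 : ℝ) ≤ S ω}) := by
    intro q q'
    rcases le_total q.1 q'.1 with h | h
    · refine ⟨⟨q.1, q.2⟩, fun ω hω => hω, fun ω hω => ?_⟩
      simp only [Set.mem_setOf_eq] at hω ⊢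
      calc (q.1 : ℝ) ≤ (q'.1 : ℝ) := by exact_mod_cast h
        _ ≤ S ω := hω
    · refine ⟨⟨q'.1, q'.2⟩, fun ω hω => ?_, fun ω hω => hω⟩
      simp only [Set.mem_setOf_eq] at hω ⊢
      calc (q'.1 : ℝ) ≤ (q.1 : ℝ) := by exact_mod_cast h
        _ ≤ S ω := hω
  have hbound : ∀ q : {q : ℚ // Nf (q:ℝ) ≤ m},
      μ {ω | (q.1 : ℝ) ≤ S ω} ≤ ENNReal.ofReal ((m : ℝ) / n) := by
    intro q
    rw [ENNReal.le_ofReal_iff_toReal_le (measure_ne_top μ _) (by positivity)]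
    calc (μ {ω | (q.1 : ℝ) ≤ S ω}).toReal
        ≤ ((Finset.univ.filter fun i => (q.1:ℝ) ≤ R i).card : ℝ) / n := hdom _
      _ ≤ (m : ℝ) / n := by
          gcongr
          exact_mod_cast q.2
  have hμE : μ E ≤ ENNReal.ofReal ((m : ℝ) / n) := by
    calc μ E ≤ μ (⋃ q : {q : ℚ // Nf (q:ℝ) ≤ m}, {ω | (q.1 : ℝ) ≤ S ω}) := measure_mono hsub
      _ = ⨆ q : {q : ℚ // Nf (q:ℝ) ≤ m}, μ {ω | (q.1 : ℝ) ≤ S ω} :=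
          hdir.measure_iUnion
      _ ≤ ENNReal.ofReal ((m : ℝ) / n) := iSup_le hbound
  have h1 : (μ E).toReal ≤ (m : ℝ) / n :=
    (ENNReal.le_ofReal_iff_toReal_le (measure_ne_top μ _) (by positivity)).mp hμE
  refine le_trans h1 ?_
  have h2 : (m : ℝ) / n ≤ ((m : ℝ) + 1) / (n + 1) := by
    rw [div_le_div_iff₀ (by exact_mod_cast hn) hn1]
    have : (m : ℝ) ≤ n := by exact_mod_cast hmn.le
    nlinarith
  have h3 : ((m : ℝ) + 1) / (n + 1) ≤ u := by
    rw [div_le_iff₀ hn1]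
    have : ((m : ℝ) + 1) = (k : ℝ) := by exact_mod_cast hmk
    rw [this]
    linarith [hkle]
  linarith
end

section
/- Let g : [0,1] → [0,∞) be non-increasing with ∫₀¹ g(u) du ≤ 1, and let p be a [0,1]-valued random variable that is super-uniform, i.e., P(p ≤ u) ≤ u for all u ∈ [0,1]. Then E[g(p)] ≤ 1. -/
open MeasureTheory

/-- p-to-e calibration: a non-increasing betting function with unit integral bound,
evaluated at a super-uniform p-value, has expectation at most 1. -/
theorem stmt_6 {Ω : Type*} [MeasurableSpace Ω] (μ : Measure Ω) [IsProbabilityMeasure μ]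
    (g : ℝ → ℝ) (hg_anti : AntitoneOn g (Set.Icc 0 1))
    (hg_nn : ∀ u ∈ Set.Icc (0:ℝ) 1, 0 ≤ g u)
    (hg_int : ∫⁻ u in Set.Icc (0:ℝ) 1, ENNReal.ofReal (g u) ≤ 1)
    (p : Ω → ℝ) (hp : ∀ ω, p ω ∈ Set.Icc (0:ℝ) 1)
    (hsu : ∀ u ∈ Set.Icc (0:ℝ) 1, μ {ω | p ω ≤ u} ≤ ENNReal.ofReal u) :
    ∫⁻ ω, ENNReal.ofReal (g (p ω)) ∂μ ≤ 1 := by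
  classical
  -- clamp to [0,1]
  set c : ℝ → ℝ := fun u => max 0 (min u 1) with hc
  have hcmem : ∀ u, c u ∈ Set.Icc (0:ℝ) 1 :=
    fun u => ⟨le_max_left _ _, max_le zero_le_one (min_le_right _ _)⟩
  have hcmono : Monotone c := fun u v h => max_le_max le_rfl (min_le_min h le_rfl)
  set g' : ℝ → ℝ := fun u => g (c u) with hg'
  have hg'_anti : Antitone g' := fun u v h => hg_anti (hcmem u) (hcmem v) (hcmono h)
  have hg'_nn : ∀ u, 0 ≤ g' u := fun u => hg_nn _ (hcmem u)
  have hg'_eq : ∀ u ∈ Set.Icc (0:ℝ) 1, g' u = g u := by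
    intro u hu
    have : c u = u := by
      simp only [hc]
      rw [min_eq_left hu.2, max_eq_right hu.1]
    simp [hg', this]
  have hg'_meas : Measurable g' := hg'_anti.measurable
  -- key tail bound
  have key : ∀ t : ℝ, 0 < t →
      μ {a | t < g' (p a)} ≤ volume ({u : ℝ | t < g' u} ∩ Set.Icc 0 1) := by
    intro t _
    set A : Set ℝ := {u : ℝ | t < g' u} ∩ Set.Icc 0 1 with hA
    set s : ℝ := sSup (insert 0 A) with hs
    have hbdd : BddAbove (insert 0 A) := by
      refine ⟨1, ?_⟩
      rintro x (rfl | hx)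
      · exact zero_le_one
      · exact hx.2.2
    have hs0 : 0 ≤ s := le_csSup hbdd (Set.mem_insert 0 A)
    have hs1 : s ≤ 1 := by
      refine csSup_le (Set.insert_nonempty _ _) ?_
      rintro x (rfl | hx)
      · exact zero_le_one
      · exact hx.2.2
    calc μ {a | t < g' (p a)} ≤ μ {a | p a ≤ s} := by
          refine measure_mono fun a ha => ?_
          exact le_csSup hbdd (Set.mem_insert_of_mem _ ⟨ha, hp a⟩)
      _ ≤ ENNReal.ofReal s := hsu s ⟨hs0, hs1⟩
      _ = volume (Set.Ico 0 s) := by rw [Real.volume_Ico, sub_zero]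
      _ ≤ volume A := by
          refine measure_mono fun u hu => ?_
          obtain ⟨hu0, hus⟩ := hu
          obtain ⟨v, hv, huv⟩ := exists_lt_of_lt_csSup (Set.insert_nonempty _ _) hus
          rcases hv with rfl | hv
          · exact absurd huv (not_lt.2 hu0)
          · exact ⟨lt_of_lt_of_le hv.1 (hg'_anti huv.le), hu0, le_trans hus.le hs1⟩
  -- layer cake on [0,1] for g'
  have layer : ∫⁻ t in Set.Ioi (0:ℝ), volume ({u : ℝ | t < g' u} ∩ Set.Icc 0 1)
      = ∫⁻ u in Set.Icc (0:ℝ) 1, ENNReal.ofReal (g' u) := by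
    rw [lintegral_eq_lintegral_meas_lt (volume.restrict (Set.Icc 0 1))
      (Filter.Eventually.of_forall hg'_nn) hg'_meas.aemeasurable]
    refine lintegral_congr fun t => ?_
    rw [Measure.restrict_apply (measurableSet_lt measurable_const hg'_meas)]
  have hint' : ∫⁻ u in Set.Icc (0:ℝ) 1, ENNReal.ofReal (g' u) ≤ 1 := by
    rw [setLIntegral_congr_fun measurableSet_Icc
      (fun u hu => congrArg ENNReal.ofReal (hg'_eq u hu))]
    exact hg_int
  -- main argument via simple functions
  rw [lintegral_def]
  refine iSup₂_le fun φ hφ => ?_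
  rw [← SimpleFunc.lintegral_eq_lintegral]
  have hfin : ∀ a, φ a ≠ ⊤ :=
    fun a => (lt_of_le_of_lt (hφ a) ENNReal.ofReal_lt_top).ne
  have hle : ∀ a, (φ a).toReal ≤ g' (p a) := by
    intro a
    have h1 : φ a ≤ ENNReal.ofReal (g' (p a)) := by
      rw [hg'_eq _ (hp a)]; exact hφ a
    calc (φ a).toReal ≤ (ENNReal.ofReal (g' (p a))).toReal :=
          ENNReal.toReal_mono ENNReal.ofReal_ne_top h1
      _ = g' (p a) := ENNReal.toReal_ofReal (hg'_nn _)
  calc ∫⁻ a, φ a ∂μ = ∫⁻ a, ENNReal.ofReal ((φ a).toReal) ∂μ := by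
        refine lintegral_congr fun a => ?_
        rw [ENNReal.ofReal_toReal (hfin a)]
    _ = ∫⁻ t in Set.Ioi (0:ℝ), μ {a | t < (φ a).toReal} :=
        lintegral_eq_lintegral_meas_lt μ
          (Filter.Eventually.of_forall fun a => ENNReal.toReal_nonneg)
          φ.measurable.ennreal_toReal.aemeasurable
    _ ≤ ∫⁻ t in Set.Ioi (0:ℝ), volume ({u : ℝ | t < g' u} ∩ Set.Icc 0 1) := by
        refine lintegral_mono_ae ?_
        filter_upwards [ae_restrict_mem measurableSet_Ioi] with t ht
        refine le_trans (measure_mono fun a ha => lt_of_lt_of_le ha (hle a)) (key t ht)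
    _ = ∫⁻ u in Set.Icc (0:ℝ) 1, ENNReal.ofReal (g' u) := layer
    _ ≤ 1 := hint'
end

section
/- Let (p_t)_{t≥1} be adapted to a filtration (H_t) and satisfy conditional super-uniformity: P(p_t ≤ u ∣ H_{t−1}) ≤ u almost surely for all u ∈ [0,1] and all t. Let (f_t)_{t≥1} be predictable (each f_t is H_{t−1}-measurable), non-increasing, nonnegative functions on [0,1] with ∫₀¹ f_t(u) du ≤ 1 almost surely. Then E_t = ∏_{s=1}^t f_s(p_s), with E_0 = 1, is a nonnegative supermartingale: E[E_t ∣ H_{t−1}] ≤ E_{t−1} almost surely. -/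
open MeasureTheory Set
open scoped ENNReal

lemma aux_L' {Ω : Type*} {m m0 : MeasurableSpace Ω} (hm : m ≤ m0) (μ : Measure Ω)
    {S : Set Ω} (hS : MeasurableSet S) {c : ℝ≥0∞}
    (hK : ∀ B, MeasurableSet[m] B → μ (B ∩ S) ≤ c * μ B)
    {G : Ω → ℝ≥0∞} (hG : Measurable[m] G) :
    ∫⁻ ω in S, G ω ∂μ ≤ c * ∫⁻ ω, G ω ∂μ := by
  have hle : (μ.restrict S).trim hm ≤ (c • μ).trim hm := by
    refine Measure.le_iff.2 fun s hs => ?_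
    rw [trim_measurableSet_eq hm hs, trim_measurableSet_eq hm hs,
      Measure.restrict_apply' hS, Measure.smul_apply, smul_eq_mul]
    exact hK s hs
  calc ∫⁻ ω in S, G ω ∂μ = ∫⁻ ω, G ω ∂((μ.restrict S).trim hm) :=
        (lintegral_trim hm hG).symm
    _ ≤ ∫⁻ ω, G ω ∂((c • μ).trim hm) := lintegral_mono' hle le_rfl
    _ = ∫⁻ ω, G ω ∂(c • μ) := lintegral_trim hm hG
    _ = c * ∫⁻ ω, G ω ∂μ := lintegral_smul_measure _ _

lemma aux_L {Ω : Type*} {m m0 : MeasurableSpace Ω} (hm : m ≤ m0) (μ : Measure Ω)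
    {q : Ω → ℝ} (hq : Measurable q)
    (hK : ∀ u : ℝ, u ∈ Icc (0:ℝ) 1 → ∀ B, MeasurableSet[m] B →
      μ (B ∩ {ω | q ω ≤ u}) ≤ ENNReal.ofReal u * μ B)
    {G : Ω → ℝ≥0∞} (hG : Measurable[m] G) (hGfin : ∫⁻ ω, G ω ∂μ ≠ ∞)
    {V : Ω → ℝ} (hV : Measurable[m] V) (hV0 : ∀ ω, 0 ≤ V ω) (hV1 : ∀ ω, V ω ≤ 1) :
    ∫⁻ ω in {ω | q ω ≤ V ω}, G ω ∂μ ≤ ∫⁻ ω, G ω * ENNReal.ofReal (V ω) ∂μ := by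
  have hGm0 : Measurable G := hG.mono hm le_rfl
  have hVm0 : Measurable V := hV.mono hm le_rfl
  set D := ∫⁻ ω, G ω * ENNReal.ofReal (V ω) ∂μ with hD
  set K := ∫⁻ ω, G ω ∂μ with hKdef
  -- step bound for each n ≥ 1
  have key : ∀ n : ℕ, 1 ≤ n →
      ∫⁻ ω in {ω | q ω ≤ V ω}, G ω ∂μ ≤ D + ENNReal.ofReal (1 / n) * K := by
    intro n hn
    have hnpos : (0:ℝ) < n := by exact_mod_cast hn
    set k : Ω → ℕ := fun ω => ⌈V ω * n⌉₊ with hk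
    have hkm : Measurable[m] k := fun s hs => (hV.mul_const (n:ℝ)) (Nat.measurable_ceil hs)
    have hkle : ∀ ω, k ω ≤ n := by
      intro ω
      exact Nat.ceil_le.2 (by nlinarith [hV1 ω])
    set B : ℕ → Set Ω := fun j => {ω | k ω = j} with hB
    have hBm : ∀ j, MeasurableSet[m] (B j) := fun j => hkm (measurableSet_singleton j)
    set s : ℕ → Set Ω := fun j => B j ∩ {ω | q ω ≤ (j : ℝ) / n} with hs
    -- inclusion
    have hincl : {ω | q ω ≤ V ω} ⊆ ⋃ j, s j := by
      intro ω hω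
      refine mem_iUnion.2 ⟨k ω, ⟨rfl, ?_⟩⟩
      have h1 : V ω ≤ (k ω : ℝ) / n := by
        rw [le_div_iff₀ hnpos]
        exact Nat.le_ceil _
      exact le_trans hω h1
    have step1 : ∫⁻ ω in {ω | q ω ≤ V ω}, G ω ∂μ ≤ ∑' j, ∫⁻ ω in s j, G ω ∂μ :=
      le_trans (lintegral_mono_set hincl) (lintegral_iUnion_le _ _)
    -- each term
    have hterm : ∀ j, ∫⁻ ω in s j, G ω ∂μ ≤
        ENNReal.ofReal ((j : ℝ) / n) * ∫⁻ ω in B j, G ω ∂μ := by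
      intro j
      rcases le_or_gt (j : ℕ) n with hjn | hjn
      · have hu : ((j : ℝ) / n) ∈ Icc (0:ℝ) 1 := by
          constructor
          · positivity
          · rw [div_le_one hnpos]; exact_mod_cast hjn
        have hGind : Measurable[m] ((B j).indicator G) := hG.indicator (hBm j)
        have e1 : ∫⁻ ω in s j, G ω ∂μ = ∫⁻ ω in {ω | q ω ≤ (j:ℝ)/n}, (B j).indicator G ω ∂μ := by
          rw [lintegral_indicator (hm _ (hBm j)), Measure.restrict_restrict (hm _ (hBm j))]
        have e2 : ∫⁻ ω, (B j).indicator G ω ∂μ = ∫⁻ ω in B j, G ω ∂μ :=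
          lintegral_indicator (hm _ (hBm j)) G
        rw [e1, ← e2]
        exact aux_L' hm μ (hq measurableSet_Iic) (hK _ hu) hGind
      · have : s j = ∅ := by
          apply eq_empty_of_forall_notMem
          rintro ω ⟨hω1, _⟩
          exact absurd (hω1 ▸ hkle ω) (Nat.not_le.2 hjn)
        simp [this]
    -- tsum to finset sum
    have hvanish : ∀ j ∉ Finset.range (n+1), (∫⁻ ω in s j, G ω ∂μ) = 0 := by
      intro j hj
      have hjn : n < j := by simpa [Nat.lt_succ_iff, Nat.not_le] using
        (by simpa using hj : ¬ j < n + 1)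
      have : s j = ∅ := by
        apply eq_empty_of_forall_notMem
        rintro ω ⟨hω1, _⟩
        exact absurd (hω1 ▸ hkle ω) (Nat.not_le.2 hjn)
      simp [this]
    have step2 : ∑' j, ∫⁻ ω in s j, G ω ∂μ
        = ∑ j ∈ Finset.range (n+1), ∫⁻ ω in s j, G ω ∂μ := tsum_eq_sum hvanish
    have step3 : ∑ j ∈ Finset.range (n+1), ∫⁻ ω in s j, G ω ∂μ ≤
        ∑ j ∈ Finset.range (n+1), ∫⁻ ω, (B j).indicator
          (fun ω => ENNReal.ofReal ((j:ℝ)/n) * G ω) ω ∂μ := by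
      refine Finset.sum_le_sum fun j _ => ?_
      refine le_trans (hterm j) ?_
      rw [lintegral_indicator (hm _ (hBm j)), lintegral_const_mul' _ _ ENNReal.ofReal_ne_top]
    have step4 : ∑ j ∈ Finset.range (n+1), ∫⁻ ω, (B j).indicator
          (fun ω => ENNReal.ofReal ((j:ℝ)/n) * G ω) ω ∂μ
        = ∫⁻ ω, ∑ j ∈ Finset.range (n+1), (B j).indicator
          (fun ω => ENNReal.ofReal ((j:ℝ)/n) * G ω) ω ∂μ := by
      rw [lintegral_finset_sum]
      intro j _
      exact ((measurable_const.mul hGm0).indicator (hm _ (hBm j)))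
    have step5 : ∀ ω, ∑ j ∈ Finset.range (n+1), (B j).indicator
          (fun ω => ENNReal.ofReal ((j:ℝ)/n) * G ω) ω
        ≤ (ENNReal.ofReal (V ω) + ENNReal.ofReal (1/n)) * G ω := by
      intro ω
      have hsum : ∑ j ∈ Finset.range (n+1), (B j).indicator
          (fun ω => ENNReal.ofReal ((j:ℝ)/n) * G ω) ω
          = ENNReal.ofReal ((k ω : ℝ)/n) * G ω := by
        rw [Finset.sum_eq_single_of_mem (k ω) (Finset.mem_range.2 (Nat.lt_succ_of_le (hkle ω)))]
        · simp [B, Set.indicator_of_mem, Set.mem_setOf_eq]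
        · intro j _ hj
          apply Set.indicator_of_notMem
          simp [B]
          exact fun h => hj h.symm
      rw [hsum]
      apply mul_le_mul_left
      have : (k ω : ℝ)/n ≤ V ω + 1/n := by
        have h1 : (k ω : ℝ) < V ω * n + 1 :=
          Nat.ceil_lt_add_one (mul_nonneg (hV0 ω) (le_of_lt hnpos))
        rw [div_le_iff₀ hnpos]
        have h2 : (V ω + 1/(n:ℝ))*n = V ω * n + 1 := by field_simp
        linarith
      calc ENNReal.ofReal ((k ω : ℝ)/n) ≤ ENNReal.ofReal (V ω + 1/n) :=
            ENNReal.ofReal_le_ofReal this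
        _ = ENNReal.ofReal (V ω) + ENNReal.ofReal (1/n) :=
            ENNReal.ofReal_add (hV0 ω) (by positivity)
    have step6 : ∫⁻ ω, (ENNReal.ofReal (V ω) + ENNReal.ofReal (1/n)) * G ω ∂μ
        = ∫⁻ ω, ENNReal.ofReal (V ω) * G ω ∂μ + ENNReal.ofReal (1/n) * K := by
      have : ∀ ω, (ENNReal.ofReal (V ω) + ENNReal.ofReal (1/n)) * G ω
          = ENNReal.ofReal (V ω) * G ω + ENNReal.ofReal (1/n) * G ω := fun ω => by ring
      simp_rw [this]
      rw [lintegral_add_left (f := fun ω => ENNReal.ofReal (V ω) * G ω) ((hVm0.ennreal_ofReal.mul hGm0)),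
        lintegral_const_mul' _ _ ENNReal.ofReal_ne_top]
    have hcomm : ∫⁻ ω, ENNReal.ofReal (V ω) * G ω ∂μ = D := by
      simp_rw [hD, mul_comm]
    calc ∫⁻ ω in {ω | q ω ≤ V ω}, G ω ∂μ
        ≤ ∑' j, ∫⁻ ω in s j, G ω ∂μ := step1
      _ = ∑ j ∈ Finset.range (n+1), ∫⁻ ω in s j, G ω ∂μ := step2
      _ ≤ ∫⁻ ω, ∑ j ∈ Finset.range (n+1), (B j).indicator
          (fun ω => ENNReal.ofReal ((j:ℝ)/n) * G ω) ω ∂μ := step3.trans (le_of_eq step4)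
      _ ≤ ∫⁻ ω, (ENNReal.ofReal (V ω) + ENNReal.ofReal (1/n)) * G ω ∂μ :=
          lintegral_mono step5
      _ = D + ENNReal.ofReal (1/n) * K := by rw [step6, hcomm]
  -- take the limit n → ∞
  have htend : Filter.Tendsto (fun n : ℕ => D + ENNReal.ofReal (1 / n) * K)
      Filter.atTop (nhds D) := by
    have h0 : Filter.Tendsto (fun n : ℕ => ENNReal.ofReal (1 / n) * K)
        Filter.atTop (nhds 0) := by
      have h1 : Filter.Tendsto (fun n : ℕ => ENNReal.ofReal (1 / n))
          Filter.atTop (nhds 0) := by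
        rw [show (0:ℝ≥0∞) = ENNReal.ofReal 0 by simp]
        exact (ENNReal.continuous_ofReal.tendsto 0).comp tendsto_one_div_atTop_nhds_zero_nat
      simpa using ENNReal.Tendsto.mul_const h1 (Or.inr hGfin)
    simpa using Filter.Tendsto.const_add D h0
  refine ge_of_tendsto htend ?_
  filter_upwards [Filter.eventually_ge_atTop 1] with n hn using key n hn


lemma aux_core {Ω : Type*} {m m0 : MeasurableSpace Ω} (hm : m ≤ m0) (μ : Measure Ω)
    [IsProbabilityMeasure μ]
    {q : Ω → ℝ} (hq : Measurable q) (hq01 : ∀ ω, q ω ∈ Icc (0:ℝ) 1)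
    (hK : ∀ u : ℝ, u ∈ Icc (0:ℝ) 1 → ∀ B, MeasurableSet[m] B →
      μ (B ∩ {ω | q ω ≤ u}) ≤ ENNReal.ofReal u * μ B)
    {φ : Ω → ℝ → ℝ} (hφm : Measurable[m.prod (inferInstance : MeasurableSpace ℝ)]
      (fun r : Ω × ℝ => φ r.1 r.2))
    (hφanti : ∀ ω, AntitoneOn (φ ω) (Icc 0 1))
    (hφnn : ∀ ω, ∀ u ∈ Icc (0:ℝ) 1, 0 ≤ φ ω u)
    (hφint : ∀ᵐ ω ∂μ, ∫⁻ u in Icc (0:ℝ) 1, ENNReal.ofReal (φ ω u) ≤ 1)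
    {G : Ω → ℝ≥0∞} (hG : Measurable[m] G) (hGtop : ∀ ω, G ω ≠ ∞)
    (hGfin : ∫⁻ ω, G ω ∂μ ≠ ∞) :
    ∫⁻ ω, G ω * ENNReal.ofReal (φ ω (q ω)) ∂μ ≤ ∫⁻ ω, G ω ∂μ := by
  have hGm0 : Measurable G := hG.mono hm le_rfl
  set i : MeasurableSpace ℝ := inferInstance with hi
  have hprod : (m.prod i) ≤ (m0.prod i) :=
    sup_le_sup (MeasurableSpace.comap_mono hm) le_rfl
  -- h : the evaluated function
  set h : Ω → ℝ := fun ω => φ ω (q ω) with hh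
  have hhm0 : Measurable h := by
    have hmk : Measurable[m0, m.prod i] (fun ω => (ω, q ω)) :=
      Measurable.prodMk (measurable_id'' hm) hq
    exact hφm.comp hmk
  -- the level-measure function w
  set ν' : Measure ℝ := volume.restrict (Icc 0 1) with hν'
  set w : Ω × ℝ → ℝ≥0∞ := fun r => ν' {u | r.2 < φ r.1 u} with hw
  have hsets : MeasurableSet[(m.prod i).prod i]
      {x : (Ω × ℝ) × ℝ | x.1.2 < φ x.1.1 x.2} := by
    have h1 : Measurable[(m.prod i).prod i] (fun x : (Ω × ℝ) × ℝ => x.1.2) :=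
      (Measurable.fst measurable_id).snd
    have h2 : Measurable[(m.prod i).prod i, m.prod i]
        (fun x : (Ω × ℝ) × ℝ => (x.1.1, x.2)) :=
      Measurable.prodMk (Measurable.fst measurable_id).fst (Measurable.snd measurable_id)
    exact measurableSet_lt h1 (hφm.comp h2)
  have hwm : Measurable[m.prod i] w := by
    have := @measurable_measure_prodMk_left (Ω × ℝ) ℝ (m.prod i) i ν' _ _ hsets
    exact this
  have hwm0 : Measurable[m0.prod i] w := hwm.mono hprod le_rfl
  have hw1 : ∀ r, w r ≤ 1 := by
    intro r
    calc w r ≤ ν' univ := measure_mono (subset_univ _)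
      _ = volume (Icc (0:ℝ) 1) := by rw [hν', Measure.restrict_apply_univ]
      _ = 1 := by rw [Real.volume_Icc]; norm_num
  have hwtop : ∀ r, w r ≠ ∞ := fun r => ne_top_of_le_ne_top ENNReal.one_ne_top (hw1 r)
  -- V s = toReal of w
  have hVm : ∀ s : ℝ, Measurable[m] (fun ω => (w (ω, s)).toReal) := by
    intro s
    have h1 : Measurable[m, m.prod i] (fun ω : Ω => (ω, s)) :=
      Measurable.prodMk measurable_id measurable_const
    exact ENNReal.measurable_toReal.comp (hwm.comp h1)
  have hV0 : ∀ s (ω : Ω), 0 ≤ (w (ω, s)).toReal := fun s ω => ENNReal.toReal_nonneg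
  have hV1 : ∀ s (ω : Ω), (w (ω, s)).toReal ≤ 1 := by
    intro s ω
    have := ENNReal.toReal_mono ENNReal.one_ne_top (hw1 (ω, s))
    simpa using this
  -- inclusion
  have hincl : ∀ s (ω : Ω), s < h ω → q ω ≤ (w (ω, s)).toReal := by
    intro s ω hs
    have hsub : Ico (0:ℝ) (q ω) ⊆ {u | s < φ ω u} ∩ Icc 0 1 := by
      intro u hu
      have hu1 : u ∈ Icc (0:ℝ) 1 := ⟨hu.1, le_trans (le_of_lt hu.2) (hq01 ω).2⟩
      refine ⟨?_, hu1⟩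
      have := hφanti ω hu1 (hq01 ω) (le_of_lt hu.2)
      exact lt_of_lt_of_le hs this
    have hmono : ENNReal.ofReal (q ω) ≤ w (ω, s) := by
      have h1 : volume (Ico (0:ℝ) (q ω)) ≤ ν' {u | s < φ ω u} := by
        rw [hν', Measure.restrict_apply' measurableSet_Icc]
        exact measure_mono hsub
      calc ENNReal.ofReal (q ω) = volume (Ico (0:ℝ) (q ω)) := by
            rw [Real.volume_Ico, sub_zero]
        _ ≤ w (ω, s) := h1
    exact (ENNReal.ofReal_le_iff_le_toReal (hwtop (ω, s))).1 hmono
  -- indicator on product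
  set ind : Ω × ℝ → ℝ≥0∞ := {z : Ω × ℝ | z.2 < h z.1}.indicator (fun _ => 1) with hind
  have hindm : Measurable ind := by
    have : MeasurableSet {z : Ω × ℝ | z.2 < h z.1} :=
      measurableSet_lt measurable_snd (hhm0.comp measurable_fst)
    exact measurable_const.indicator this
  set ν : Measure ℝ := volume.restrict (Ioi 0) with hνdef
  -- step A: lhs = double integral
  have stepA : ∫⁻ ω, G ω * ENNReal.ofReal (h ω) ∂μ
      = ∫⁻ ω, ∫⁻ s, G ω * ind (ω, s) ∂ν ∂μ := by
    refine lintegral_congr fun ω => ?_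
    rw [lintegral_const_mul' _ _ (hGtop ω)]
    congr 1
    have : ∀ s : ℝ, ind (ω, s) = (Iio (h ω)).indicator (1 : ℝ → ℝ≥0∞) s := by
      intro s; simp [hind, Set.indicator_apply, Set.mem_setOf_eq, Set.mem_Iio]
    simp_rw [this]
    rw [lintegral_indicator_one measurableSet_Iio]
    rw [hνdef, Measure.restrict_apply measurableSet_Iio, Set.Iio_inter_Ioi,
      Real.volume_Ioo, sub_zero]
  -- swap 1
  have hunc1 : AEMeasurable (Function.uncurry fun ω s => G ω * ind (ω, s)) (μ.prod ν) := by
    have : (Function.uncurry fun ω s => G ω * ind (ω, s))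
        = fun z : Ω × ℝ => G z.1 * ind z := by
      ext z; cases z; rfl
    rw [this]
    exact ((hGm0.comp measurable_fst).mul hindm).aemeasurable
  have swap1 : ∫⁻ ω, ∫⁻ s, G ω * ind (ω, s) ∂ν ∂μ
      = ∫⁻ s, ∫⁻ ω, G ω * ind (ω, s) ∂μ ∂ν := lintegral_lintegral_swap hunc1
  -- inner bound for each s
  have hinner : ∀ s : ℝ, ∫⁻ ω, G ω * ind (ω, s) ∂μ ≤ ∫⁻ ω, G ω * w (ω, s) ∂μ := by
    intro s
    have hb1 : ∫⁻ ω, G ω * ind (ω, s) ∂μ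
        ≤ ∫⁻ ω in {ω | q ω ≤ (w (ω, s)).toReal}, G ω ∂μ := by
      have hset : MeasurableSet {ω | q ω ≤ (w (ω, s)).toReal} := by
        have := (hVm s).mono hm le_rfl
        exact measurableSet_le hq this
      rw [← lintegral_indicator hset]
      refine lintegral_mono fun ω => ?_
      by_cases hω : s < h ω
      · have hmem : ω ∈ {ω | q ω ≤ (w (ω, s)).toReal} := hincl s ω hω
        rw [Set.indicator_of_mem hmem]
        have : ind (ω, s) ≤ 1 := by
          rw [hind]; exact Set.indicator_le_self' (fun _ _ => zero_le_one) _
        calc G ω * ind (ω, s) ≤ G ω * 1 := mul_le_mul_right this _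
          _ = G ω := mul_one _
      · have : ind (ω, s) = 0 := by
          simp only [hind, Set.indicator_apply, Set.mem_setOf_eq]
          simp [hω]
        simp [this]
    have hb2 : ∫⁻ ω in {ω | q ω ≤ (w (ω, s)).toReal}, G ω ∂μ
        ≤ ∫⁻ ω, G ω * ENNReal.ofReal ((w (ω, s)).toReal) ∂μ :=
      aux_L hm μ hq hK hG hGfin (hVm s) (hV0 s) (hV1 s)
    have hb3 : ∫⁻ ω, G ω * ENNReal.ofReal ((w (ω, s)).toReal) ∂μ
        = ∫⁻ ω, G ω * w (ω, s) ∂μ := by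
      refine lintegral_congr fun ω => ?_
      rw [ENNReal.ofReal_toReal (hwtop (ω, s))]
    exact hb1.trans (hb2.trans (le_of_eq hb3))
  -- swap 2
  have hunc2 : AEMeasurable (Function.uncurry fun ω s => G ω * w (ω, s)) (μ.prod ν) := by
    have : (Function.uncurry fun ω s => G ω * w (ω, s))
        = fun z : Ω × ℝ => G z.1 * w z := by
      ext z; cases z; rfl
    rw [this]
    exact ((hGm0.comp measurable_fst).mul (hwm0.mono le_rfl le_rfl)).aemeasurable
  have swap2 : ∫⁻ s, ∫⁻ ω, G ω * w (ω, s) ∂μ ∂ν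
      = ∫⁻ ω, ∫⁻ s, G ω * w (ω, s) ∂ν ∂μ := (lintegral_lintegral_swap hunc2).symm
  -- layercake identity per ω
  have hlayer : ∀ ω, ∫⁻ s, w (ω, s) ∂ν = ∫⁻ u in Icc (0:ℝ) 1, ENNReal.ofReal (φ ω u) := by
    intro ω
    have hφωm : Measurable (φ ω) := by
      have h1 : Measurable[i, m.prod i] (fun u : ℝ => (ω, u)) :=
        Measurable.prodMk measurable_const measurable_id
      exact (hφm.comp h1 : Measurable[i, i] _)
    have hnn : 0 ≤ᵐ[ν'] φ ω := by
      rw [hν']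
      filter_upwards [ae_restrict_mem measurableSet_Icc] with u hu
      exact hφnn ω u hu
    have := lintegral_eq_lintegral_meas_lt ν' hnn hφωm.aemeasurable
    rw [← hν']
    exact this.symm
  -- final bound
  have hfinal : ∫⁻ ω, ∫⁻ s, G ω * w (ω, s) ∂ν ∂μ ≤ ∫⁻ ω, G ω ∂μ := by
    refine lintegral_mono_ae ?_
    filter_upwards [hφint] with ω hI
    rw [lintegral_const_mul' _ _ (hGtop ω), hlayer ω]
    calc G ω * ∫⁻ u in Icc (0:ℝ) 1, ENNReal.ofReal (φ ω u)
        ≤ G ω * 1 := mul_le_mul_right hI _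
      _ = G ω := mul_one _
  calc ∫⁻ ω, G ω * ENNReal.ofReal (φ ω (q ω)) ∂μ
      = ∫⁻ ω, ∫⁻ s, G ω * ind (ω, s) ∂ν ∂μ := stepA
    _ = ∫⁻ s, ∫⁻ ω, G ω * ind (ω, s) ∂μ ∂ν := swap1
    _ ≤ ∫⁻ s, ∫⁻ ω, G ω * w (ω, s) ∂μ ∂ν := lintegral_mono fun s => hinner s
    _ = ∫⁻ ω, ∫⁻ s, G ω * w (ω, s) ∂ν ∂μ := swap2
    _ ≤ ∫⁻ ω, G ω ∂μ := hfinal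


/-- E-process from conditionally super-uniform p-values via predictable
non-increasing betting functions: the product evidence process is a
supermartingale (one-step supermartingale property at every time `T ≥ 1`). -/
theorem stmt_8 {Ω : Type*} {m0 : MeasurableSpace Ω} (μ : Measure Ω) [IsProbabilityMeasure μ]
    (𝒢 : Filtration ℕ m0) (p : ℕ → Ω → ℝ) (hadapt : StronglyAdapted 𝒢 p)
    (hp01 : ∀ t ω, p t ω ∈ Set.Icc (0:ℝ) 1)
    (hsu : ∀ t, 1 ≤ t → ∀ u ∈ Set.Icc (0:ℝ) 1, ∀ᵐ ω ∂μ,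
      (μ[Set.indicator {ω' | p t ω' ≤ u} (fun _ => (1:ℝ)) | 𝒢 (t-1)]) ω ≤ u)
    (f : ℕ → Ω → ℝ → ℝ)
    (hf_meas : ∀ t, 1 ≤ t →
      Measurable[(𝒢 (t-1)).prod (borel ℝ)] (fun q : Ω × ℝ => f t q.1 q.2))
    (hf_anti : ∀ t ω, AntitoneOn (f t ω) (Set.Icc 0 1))
    (hf_nn : ∀ t ω, ∀ u ∈ Set.Icc (0:ℝ) 1, 0 ≤ f t ω u)
    (hf_int : ∀ t, 1 ≤ t → ∀ᵐ ω ∂μ,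
      ∫⁻ u in Set.Icc (0:ℝ) 1, ENNReal.ofReal (f t ω u) ≤ 1)
    (T : ℕ) (hT : 1 ≤ T) :
    μ[fun ω => ∏ s ∈ Finset.Icc 1 T, f s ω (p s ω) | 𝒢 (T-1)]
      ≤ᵐ[μ] fun ω => ∏ s ∈ Finset.Icc 1 (T-1), f s ω (p s ω) := by
  obtain ⟨T', rfl⟩ : ∃ T'', T = T'' + 1 := ⟨T - 1, (Nat.succ_pred_eq_of_pos hT).symm⟩
  simp only [Nat.add_sub_cancel]
  have hm : (𝒢 T' : MeasurableSpace Ω) ≤ m0 := 𝒢.le T'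
  have hT1 : 1 ≤ T' + 1 := Nat.le_add_left 1 T'
  set q : Ω → ℝ := p (T' + 1) with hqdef
  have hq : Measurable q := ((hadapt (T' + 1)).measurable).mono (𝒢.le _) le_rfl
  have hq01 : ∀ ω, q ω ∈ Icc (0:ℝ) 1 := hp01 (T' + 1)
  -- super-uniformity consequence
  have hK : ∀ u : ℝ, u ∈ Icc (0:ℝ) 1 → ∀ B, MeasurableSet[𝒢 T'] B →
      μ (B ∩ {ω | q ω ≤ u}) ≤ ENNReal.ofReal u * μ B := by
    intro u hu B hB
    set S : Set Ω := {ω | q ω ≤ u} with hSdef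
    have hSmeas : MeasurableSet S := hq measurableSet_Iic
    set ind : Ω → ℝ := S.indicator (fun _ => (1:ℝ)) with hinddef
    have hind_int : Integrable ind μ := (integrable_const (1:ℝ)).indicator hSmeas
    have hae : ∀ᵐ ω ∂μ, (μ[ind | 𝒢 T']) ω ≤ u := by
      have := hsu (T' + 1) hT1 u hu
      simpa only [Nat.add_sub_cancel] using this
    have h1 : ∫ ω in B, ind ω ∂μ = (μ (S ∩ B)).toReal := by
      have hid : ind = S.indicator (1 : Ω → ℝ) := rfl
      rw [hid, integral_indicator_one hSmeas, measureReal_def, Measure.restrict_apply hSmeas]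
    have h2 : ∫ ω in B, ind ω ∂μ = ∫ ω in B, (μ[ind | 𝒢 T']) ω ∂μ :=
      (setIntegral_condExp hm hind_int hB).symm
    have h3 : ∫ ω in B, (μ[ind | 𝒢 T']) ω ∂μ ≤ ∫ ω in B, u ∂μ := by
      refine integral_mono_ae integrable_condExp.integrableOn
        (integrable_const u).integrableOn (ae_restrict_of_ae hae)
    have h4 : ∫ ω in B, u ∂μ = u * (μ B).toReal := by
      rw [setIntegral_const, smul_eq_mul, mul_comm, measureReal_def]
    have h5 : (μ (B ∩ S)).toReal ≤ u * (μ B).toReal := by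
      rw [inter_comm, ← h1, h2]
      rw [h4] at h3
      exact h3
    calc μ (B ∩ S) = ENNReal.ofReal ((μ (B ∩ S)).toReal) :=
          (ENNReal.ofReal_toReal (measure_ne_top μ _)).symm
      _ ≤ ENNReal.ofReal (u * (μ B).toReal) := ENNReal.ofReal_le_ofReal h5
      _ = ENNReal.ofReal u * ENNReal.ofReal ((μ B).toReal) := ENNReal.ofReal_mul hu.1
      _ = ENNReal.ofReal u * μ B := by rw [ENNReal.ofReal_toReal (measure_ne_top μ _)]
  -- the functions
  set F : Ω → ℝ := fun ω => ∏ s ∈ Finset.Icc 1 T', f s ω (p s ω) with hFdef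
  set h : Ω → ℝ := fun ω => f (T' + 1) ω (q ω) with hhdef
  set g : Ω → ℝ := fun ω => ∏ s ∈ Finset.Icc 1 (T' + 1), f s ω (p s ω) with hgdef
  have hsplit : ∀ ω, g ω = F ω * h ω := by
    intro ω
    rw [hgdef, hFdef, hhdef]
    exact Finset.prod_Icc_succ_top hT1 _
  have hfactor' : ∀ s : ℕ, 1 ≤ s → ∀ N : ℕ, s ≤ N →
      Measurable[𝒢 N] (fun ω => f s ω (p s ω)) := by
    intro s hs1 N hsN
    have hmk : Measurable[𝒢 N, (𝒢 (s - 1)).prod (borel ℝ)] (fun ω => (ω, p s ω)) := by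
      refine Measurable.prodMk (measurable_id'' (𝒢.mono (by omega))) ?_
      exact ((hadapt s).measurable).mono (𝒢.mono hsN) le_rfl
    exact (hf_meas s hs1).comp hmk
  have hFm : Measurable[𝒢 T'] F := by
    rw [hFdef]
    refine Finset.measurable_prod _ fun s hs => ?_
    rw [Finset.mem_Icc] at hs
    exact hfactor' s hs.1 T' hs.2
  have hFm0 : Measurable F := hFm.mono hm le_rfl
  have hhm0 : Measurable h := by
    rw [hhdef]
    exact (hfactor' (T' + 1) hT1 (T' + 1) le_rfl).mono (𝒢.le _) le_rfl
  have hgm0 : Measurable g := by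
    rw [hgdef]
    refine Finset.measurable_prod _ fun s hs => ?_
    rw [Finset.mem_Icc] at hs
    exact (hfactor' s hs.1 (T' + 1) hs.2).mono (𝒢.le _) le_rfl
  have hFnn : ∀ ω, 0 ≤ F ω := fun ω =>
    Finset.prod_nonneg fun s _ => hf_nn s ω _ (hp01 s ω)
  have hhnn : ∀ ω, 0 ≤ h ω := fun ω => hf_nn (T' + 1) ω _ (hq01 ω)
  have hgnn : ∀ ω, 0 ≤ g ω := fun ω => (hsplit ω) ▸ mul_nonneg (hFnn ω) (hhnn ω)
  -- hypotheses of aux_core for φ = f (T'+1)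
  have hφm : Measurable[(𝒢 T' : MeasurableSpace Ω).prod (inferInstance : MeasurableSpace ℝ)]
      (fun r : Ω × ℝ => f (T' + 1) r.1 r.2) := by
    have := hf_meas (T' + 1) hT1
    simpa only [Nat.add_sub_cancel] using this
  have hφanti : ∀ ω, AntitoneOn (f (T' + 1) ω) (Icc 0 1) := hf_anti (T' + 1)
  have hφnn : ∀ ω, ∀ u ∈ Icc (0:ℝ) 1, 0 ≤ f (T' + 1) ω u := hf_nn (T' + 1)
  have hφint : ∀ᵐ ω ∂μ, ∫⁻ u in Icc (0:ℝ) 1, ENNReal.ofReal (f (T' + 1) ω u) ≤ 1 :=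
    hf_int (T' + 1) hT1
  -- key set-integral inequality
  have C1 : ∀ (A : Set Ω), MeasurableSet[𝒢 T'] A → ∀ n : ℕ,
      ∫ ω in A ∩ {ω | F ω ≤ (n:ℝ)}, g ω ∂μ ≤ ∫ ω in A ∩ {ω | F ω ≤ (n:ℝ)}, F ω ∂μ := by
    intro A hA n
    set D : Set Ω := {ω | F ω ≤ (n:ℝ)} with hDdef
    have hDm : MeasurableSet[𝒢 T'] D := hFm measurableSet_Iic
    set S : Set Ω := A ∩ D with hSdef
    have hSm : MeasurableSet[𝒢 T'] S := hA.inter hDm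
    have hSm0 : MeasurableSet S := hm _ hSm
    set G : Ω → ℝ≥0∞ := S.indicator (fun ω => ENNReal.ofReal (F ω)) with hGdef
    have hGm : Measurable[𝒢 T'] G := (hFm.ennreal_ofReal).indicator hSm
    have hGtop : ∀ ω, G ω ≠ ∞ := by
      intro ω
      rw [hGdef]
      by_cases hω : ω ∈ S
      · rw [Set.indicator_of_mem hω]; exact ENNReal.ofReal_ne_top
      · rw [Set.indicator_of_notMem hω]; exact ENNReal.zero_ne_top
    have hGle : ∀ ω, G ω ≤ ENNReal.ofReal n := by
      intro ω
      rw [hGdef]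
      by_cases hω : ω ∈ S
      · rw [Set.indicator_of_mem hω]
        exact ENNReal.ofReal_le_ofReal hω.2
      · rw [Set.indicator_of_notMem hω]; exact zero_le
    have hGfin : ∫⁻ ω, G ω ∂μ ≠ ∞ := by
      refine ne_top_of_le_ne_top (b := ENNReal.ofReal n) ?_ ?_
      · exact ENNReal.ofReal_ne_top
      · calc ∫⁻ ω, G ω ∂μ ≤ ∫⁻ _, ENNReal.ofReal n ∂μ := lintegral_mono hGle
          _ = ENNReal.ofReal n := by rw [lintegral_const, measure_univ, mul_one]
    have core := aux_core hm μ hq hq01 hK hφm hφanti hφnn hφint hGm hGtop hGfin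
    have lhs_eq : ∫⁻ ω, G ω * ENNReal.ofReal (f (T' + 1) ω (q ω)) ∂μ
        = ∫⁻ ω in S, ENNReal.ofReal (g ω) ∂μ := by
      rw [← lintegral_indicator hSm0]
      refine lintegral_congr fun ω => ?_
      rw [hGdef]
      by_cases hω : ω ∈ S
      · rw [Set.indicator_of_mem hω, Set.indicator_of_mem hω, hsplit ω,
          ENNReal.ofReal_mul (hFnn ω)]
      · rw [Set.indicator_of_notMem hω, Set.indicator_of_notMem hω, zero_mul]
    have rhs_eq : ∫⁻ ω, G ω ∂μ = ∫⁻ ω in S, ENNReal.ofReal (F ω) ∂μ := by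
      rw [hGdef, lintegral_indicator hSm0]
    have key : ∫⁻ ω in S, ENNReal.ofReal (g ω) ∂μ ≤ ∫⁻ ω in S, ENNReal.ofReal (F ω) ∂μ := by
      rw [← lhs_eq, ← rhs_eq]
      exact core
    have hrfin : ∫⁻ ω in S, ENNReal.ofReal (F ω) ∂μ ≠ ∞ := by
      rw [← rhs_eq]; exact hGfin
    have e1 : ∫ ω in S, g ω ∂μ = (∫⁻ ω in S, ENNReal.ofReal (g ω) ∂μ).toReal := by
      rw [integral_eq_lintegral_of_nonneg_ae (ae_of_all _ hgnn)
        (hgm0.aestronglyMeasurable)]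
    have e2 : ∫ ω in S, F ω ∂μ = (∫⁻ ω in S, ENNReal.ofReal (F ω) ∂μ).toReal := by
      rw [integral_eq_lintegral_of_nonneg_ae (ae_of_all _ hFnn)
        (hFm0.aestronglyMeasurable)]
    rw [e1, e2]
    exact ENNReal.toReal_mono hrfin key
  -- conclude
  by_cases hgint : Integrable g μ
  · set C : Ω → ℝ := μ[g | 𝒢 T'] with hCdef
    have hCm : StronglyMeasurable[𝒢 T'] C := stronglyMeasurable_condExp
    have hCint : Integrable C μ := integrable_condExp
    have hzero : ∀ n : ℕ, μ ({ω | F ω < C ω} ∩ {ω | F ω ≤ (n:ℝ)}) = 0 := by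
      intro n
      set A : Set Ω := {ω | F ω < C ω} with hAdef
      have hAm : MeasurableSet[𝒢 T'] A := measurableSet_lt hFm hCm.measurable
      set D : Set Ω := {ω | F ω ≤ (n:ℝ)} with hDdef
      have hDm : MeasurableSet[𝒢 T'] D := hFm measurableSet_Iic
      set S : Set Ω := A ∩ D with hSdef
      have hSm : MeasurableSet[𝒢 T'] S := hAm.inter hDm
      have hSm0 : MeasurableSet S := hm _ hSm
      have h1 : ∫ ω in S, C ω ∂μ = ∫ ω in S, g ω ∂μ := setIntegral_condExp hm hgint hSm
      have h2 : ∫ ω in S, g ω ∂μ ≤ ∫ ω in S, F ω ∂μ := C1 A hAm n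
      have hFS_int : IntegrableOn F S μ := by
        refine Measure.integrableOn_of_bounded (M := (n:ℝ)) (measure_ne_top μ S)
          hFm0.aestronglyMeasurable ?_
        refine (ae_restrict_iff' hSm0).2 (ae_of_all _ fun ω hω => ?_)
        rw [Real.norm_eq_abs, abs_of_nonneg (hFnn ω)]
        exact hω.2
      have hsub_int : IntegrableOn (fun ω => C ω - F ω) S μ :=
        hCint.integrableOn.sub hFS_int
      have h3 : ∫ ω in S, (C ω - F ω) ∂μ ≤ 0 := by
        rw [integral_sub hCint.integrableOn hFS_int]
        linarith [h1, h2]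
      have hnn : 0 ≤ᵐ[μ.restrict S] fun ω => C ω - F ω := by
        refine (ae_restrict_iff' hSm0).2 (ae_of_all _ fun ω hω => ?_)
        exact sub_nonneg.2 (le_of_lt hω.1)
      have h4 : ∫ ω in S, (C ω - F ω) ∂μ = 0 :=
        le_antisymm h3 (integral_nonneg_of_ae hnn)
      have h5 : (fun ω => C ω - F ω) =ᵐ[μ.restrict S] 0 :=
        (integral_eq_zero_iff_of_nonneg_ae hnn hsub_int).1 h4
      have h6 : μ.restrict S {ω | C ω - F ω ≠ 0} = 0 := by
        have := h5
        rw [Filter.EventuallyEq, ae_iff] at this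
        simpa using this
      have hsub : S ⊆ {ω | C ω - F ω ≠ 0} := by
        intro ω hω
        have : 0 < C ω - F ω := sub_pos.2 hω.1
        exact ne_of_gt this
      refine le_antisymm ?_ zero_le
      calc μ S = μ.restrict S S := (Measure.restrict_apply_self μ S).symm
        _ ≤ μ.restrict S {ω | C ω - F ω ≠ 0} := measure_mono hsub
        _ = 0 := h6
    have hbad : μ {ω | F ω < C ω} = 0 := by
      have hcover : {ω | F ω < C ω} ⊆ ⋃ n : ℕ, ({ω | F ω < C ω} ∩ {ω | F ω ≤ (n:ℝ)}) := by
        intro ω hω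
        obtain ⟨n, hn⟩ := exists_nat_ge (F ω)
        exact mem_iUnion.2 ⟨n, hω, hn⟩
      refine le_antisymm ?_ zero_le
      calc μ {ω | F ω < C ω} ≤ μ (⋃ n : ℕ, ({ω | F ω < C ω} ∩ {ω | F ω ≤ (n:ℝ)})) :=
            measure_mono hcover
        _ = 0 := measure_iUnion_null hzero
    show C ≤ᵐ[μ] F
    rw [Filter.EventuallyLE, ae_iff]
    have : {ω | ¬ C ω ≤ F ω} = {ω | F ω < C ω} := by
      ext ω; simp [not_le]
    rw [this]
    exact hbad
  · have : μ[g | 𝒢 T'] = 0 := condExp_of_not_integrable hgint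
    show μ[g | 𝒢 T'] ≤ᵐ[μ] F
    rw [this]
    exact ae_of_all _ fun ω => hFnn ω
end

section
/- Let (e_t)_{t≥1} be adapted random variables with 0 ≤ e_t ≤ M and E[e_t ∣ H_{t−1}] ≤ β almost surely for a constant β ≥ 1. Set E_t = ∏_{j=1}^t e_j with E_0 = 1, and τ_α = inf{t ≥ 1 : E_t ≥ 1/α}. Then for every T ∈ ℕ and α ∈ (0,1), P(τ_α ≤ T) ≤ α·β^T. -/
open MeasureTheory

namespace Stmt19Aux

variable {Ω : Type*}

/-- The evidence product `E_t = ∏_{j=1}^t e_j`. -/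
noncomputable def Pr (e : ℕ → Ω → ℝ) (t : ℕ) (ω : Ω) : ℝ := ∏ j ∈ Finset.Icc 1 t, e j ω

/-- The event that the product has crossed `1/α` by time `t`. -/
def St (e : ℕ → Ω → ℝ) (α : ℝ) (t : ℕ) : Set Ω :=
  {ω | ∃ s, 1 ≤ s ∧ s ≤ t ∧ 1/α ≤ Pr e s ω}

open scoped Classical in
/-- The stopped increments. -/
noncomputable def gg (e : ℕ → Ω → ℝ) (α : ℝ) (j : ℕ) (ω : Ω) : ℝ :=
  if ω ∈ St e α (j-1) then 1 else e j ω

/-- The stopped product process. -/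
noncomputable def Xt (e : ℕ → Ω → ℝ) (α : ℝ) (t : ℕ) (ω : Ω) : ℝ :=
  ∏ j ∈ Finset.Icc 1 t, gg e α j ω

end Stmt19Aux

open Stmt19Aux

/-- Drift-robustness bound: if each factor e_t ∈ [0,M] has conditional mean at
most β ≥ 1, the product evidence process crosses 1/α by time T with probability
at most α·β^T. -/
theorem stmt_19 {Ω : Type*} {m0 : MeasurableSpace Ω} (μ : Measure Ω) [IsProbabilityMeasure μ]
    (𝒢 : Filtration ℕ m0) (e : ℕ → Ω → ℝ) (hadapt : StronglyAdapted 𝒢 e)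
    (M : ℝ) (hM : 0 < M)
    (hbdd : ∀ t, 1 ≤ t → ∀ᵐ ω ∂μ, e t ω ∈ Set.Icc 0 M)
    (β : ℝ) (hβ : 1 ≤ β)
    (hcond : ∀ t, 1 ≤ t → ∀ᵐ ω ∂μ, (μ[e t | 𝒢 (t-1)]) ω ≤ β)
    (α : ℝ) (hα : α ∈ Set.Ioo (0:ℝ) 1) (T : ℕ) :
    μ {ω | ∃ t, 1 ≤ t ∧ t ≤ T ∧ 1/α ≤ ∏ j ∈ Finset.Icc 1 t, e j ω}
      ≤ ENNReal.ofReal (α * β ^ T) := by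
  classical
  obtain ⟨hα0, hα1⟩ := hα
  have hβ0 : (0:ℝ) < β := lt_of_lt_of_le one_pos hβ
  set K : ℝ := max 1 M with hK
  have hK1 : (1:ℝ) ≤ K := le_max_left _ _
  have hK0 : (0:ℝ) ≤ K := le_trans zero_le_one hK1
  have hKt : ∀ n : ℕ, (0:ℝ) ≤ K ^ n := fun n => le_trans zero_le_one (one_le_pow₀ hK1)
  -- measurability facts
  have hmeasE : ∀ t j, j ≤ t → Measurable[𝒢 t] (e j) :=
    fun t j hj => ((hadapt j).measurable).mono (𝒢.mono hj) le_rfl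
  have hmeasPr : ∀ t j, j ≤ t → Measurable[𝒢 t] (Pr e j) := fun t j hj =>
    Finset.measurable_prod _ fun i hi =>
      hmeasE t i (le_trans (Finset.mem_Icc.1 hi).2 hj)
  have hmeasSt : ∀ t s, s ≤ t → MeasurableSet[𝒢 t] (St e α s) := by
    intro t s hs
    have hrw : St e α s = ⋃ j ∈ Finset.Icc 1 s, {ω | 1/α ≤ Pr e j ω} := by
      ext ω
      simp [St, Finset.mem_Icc, and_assoc]
    rw [hrw]
    exact (Finset.Icc 1 s).measurableSet_biUnion fun j hj =>
      measurableSet_le measurable_const (hmeasPr t j (le_trans (Finset.mem_Icc.1 hj).2 hs))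
  have hmeasgg : ∀ t j, j ≤ t → Measurable[𝒢 t] (gg e α j) := by
    intro t j hj
    have hrw : gg e α j = fun ω => if ω ∈ St e α (j-1) then (1:ℝ) else e j ω := rfl
    rw [hrw]
    exact Measurable.ite (hmeasSt t (j-1) (le_trans (Nat.sub_le j 1) hj))
      measurable_const (hmeasE t j hj)
  have hmeasXt : ∀ t, Measurable[𝒢 t] (Xt e α t) := fun t =>
    Finset.measurable_prod _ fun j hj => hmeasgg t j (Finset.mem_Icc.1 hj).2
  have hmeasXt0 : ∀ t, Measurable[m0] (Xt e α t) := fun t => (hmeasXt t).mono (𝒢.le t) le_rfl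
  -- a.e. bounds
  have hbdd' : ∀ᵐ ω ∂μ, ∀ j, 1 ≤ j → e j ω ∈ Set.Icc 0 M := by
    rw [ae_all_iff]
    intro j
    by_cases h1 : 1 ≤ j
    · filter_upwards [hbdd j h1] with ω hω _ using hω
    · filter_upwards with ω h using absurd h h1
  have hXbound : ∀ᵐ ω ∂μ, ∀ t, 0 ≤ Xt e α t ω ∧ Xt e α t ω ≤ K ^ t := by
    filter_upwards [hbdd'] with ω hω
    intro t
    have hgb : ∀ j ∈ Finset.Icc 1 t, 0 ≤ gg e α j ω ∧ gg e α j ω ≤ K := by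
      intro j hj
      obtain ⟨h1, _⟩ := Finset.mem_Icc.1 hj
      unfold gg
      split
      · exact ⟨zero_le_one, hK1⟩
      · exact ⟨(hω j h1).1, le_trans (hω j h1).2 (le_max_right _ _)⟩
    constructor
    · exact Finset.prod_nonneg fun j hj => (hgb j hj).1
    · calc Xt e α t ω ≤ ∏ _j ∈ Finset.Icc 1 t, K :=
            Finset.prod_le_prod (fun j hj => (hgb j hj).1) (fun j hj => (hgb j hj).2)
        _ = K ^ t := by simp [Finset.prod_const, Nat.card_Icc]
  have hXint : ∀ t, Integrable (Xt e α t) μ := by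
    intro t
    refine Integrable.mono' (integrable_const (K ^ t)) (hmeasXt0 t).aestronglyMeasurable ?_
    filter_upwards [hXbound] with ω hω
    rw [Real.norm_eq_abs, abs_of_nonneg (hω t).1]
    exact (hω t).2
  -- key supermartingale-type integral bound
  have key : ∀ t, ∫ ω, Xt e α t ω ∂μ ≤ β ^ t := by
    intro t
    induction t with
    | zero => simp [Xt]
    | succ t ih =>
      have hmle : 𝒢 t ≤ m0 := 𝒢.le t
      set A : Set Ω := St e α t with hA
      have hAmeas : MeasurableSet[𝒢 t] A := hmeasSt t t le_rfl
      set h : Ω → ℝ := fun ω => if ω ∈ A then 0 else Xt e α t ω with hh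
      set i : Ω → ℝ := fun ω => if ω ∈ A then Xt e α t ω else 0 with hi
      have hsplit : ∀ ω, Xt e α (t+1) ω = i ω + (h * e (t+1)) ω := by
        intro ω
        have hx : Xt e α (t+1) ω = Xt e α t ω * gg e α (t+1) ω := by
          unfold Xt
          rw [Finset.prod_Icc_succ_top (by omega)]
        rw [hx]
        by_cases hω : ω ∈ A
        · have hg : gg e α (t+1) ω = 1 := by
            unfold gg
            exact if_pos (show ω ∈ St e α (t+1-1) from hω)
          simp [hi, hh, hω, hg]
        · have hg : gg e α (t+1) ω = e (t+1) ω := by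
            unfold gg
            exact if_neg (show ω ∉ St e α (t+1-1) from hω)
          simp [hi, hh, hω, hg]
      -- measurability / integrability
      have hhsm : StronglyMeasurable[𝒢 t] h :=
        (Measurable.ite hAmeas measurable_const (hmeasXt t)).stronglyMeasurable
      have hhm0 : Measurable[m0] h := hhsm.measurable.mono hmle le_rfl
      have him0 : Measurable[m0] i :=
        ((Measurable.ite hAmeas (hmeasXt t) measurable_const).mono hmle le_rfl)
      have hem0 : Measurable[m0] (e (t+1)) :=
        (hadapt (t+1)).measurable.mono (𝒢.le (t+1)) le_rfl
      have hhbd : ∀ᵐ ω ∂μ, 0 ≤ h ω ∧ h ω ≤ K ^ t := by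
        filter_upwards [hXbound] with ω hω
        by_cases hm : ω ∈ A
        · simp only [hh, if_pos hm]
          exact ⟨le_refl 0, hKt t⟩
        · simp only [hh, if_neg hm]
          exact hω t
      have hinth : Integrable h μ := by
        refine Integrable.mono' (integrable_const (K ^ t)) hhm0.aestronglyMeasurable ?_
        filter_upwards [hhbd] with ω hω
        rw [Real.norm_eq_abs, abs_of_nonneg hω.1]; exact hω.2
      have hinti : Integrable i μ := by
        refine Integrable.mono' (integrable_const (K ^ t)) him0.aestronglyMeasurable ?_
        filter_upwards [hXbound] with ω hω
        by_cases hm : ω ∈ A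
        · rw [Real.norm_eq_abs]; simp only [hi, if_pos hm]
          rw [abs_of_nonneg (hω t).1]; exact (hω t).2
        · simp only [hi, if_neg hm, norm_zero]
          exact hKt t
      have hinte : Integrable (e (t+1)) μ := by
        refine Integrable.mono' (integrable_const M) hem0.aestronglyMeasurable ?_
        filter_upwards [hbdd'] with ω hω
        rw [Real.norm_eq_abs, abs_of_nonneg (hω (t+1) (by omega)).1]
        exact (hω (t+1) (by omega)).2
      have hinthe : Integrable (h * e (t+1)) μ := by
        refine Integrable.mono' (integrable_const (K ^ t * M)) (hhm0.mul hem0).aestronglyMeasurable ?_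
        filter_upwards [hhbd, hbdd'] with ω hω he
        rw [Pi.mul_apply, Real.norm_eq_abs, abs_mul, abs_of_nonneg hω.1,
          abs_of_nonneg (he (t+1) (by omega)).1]
        exact mul_le_mul hω.2 (he (t+1) (by omega)).2 (he (t+1) (by omega)).1 (hKt t)
      -- pull out h from the conditional expectation
      have hpull : μ[h * e (t+1)|𝒢 t] =ᵐ[μ] h * μ[e (t+1)|𝒢 t] :=
        condExp_mul_of_stronglyMeasurable_left hhsm hinthe hinte
      have hcond' : ∀ᵐ ω ∂μ, (μ[e (t+1)|𝒢 t]) ω ≤ β := by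
        have := hcond (t+1) (by omega)
        simpa using this
      have h1 : ∫ ω, (h * e (t+1)) ω ∂μ = ∫ ω, (h * μ[e (t+1)|𝒢 t]) ω ∂μ := by
        rw [← integral_condExp hmle (f := h * e (t+1))]
        exact integral_congr_ae hpull
      have h2 : ∫ ω, (h * μ[e (t+1)|𝒢 t]) ω ∂μ ≤ ∫ ω, β * h ω ∂μ := by
        refine integral_mono_ae (integrable_condExp.congr hpull) (hinth.const_mul β) ?_
        filter_upwards [hhbd, hcond'] with ω hω hc
        rw [Pi.mul_apply, mul_comm β (h ω)]
        exact mul_le_mul_of_nonneg_left hc hω.1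
      have h3 : ∫ ω, Xt e α (t+1) ω ∂μ = ∫ ω, i ω ∂μ + ∫ ω, (h * e (t+1)) ω ∂μ := by
        simp_rw [hsplit]
        exact integral_add hinti hinthe
      have h4 : ∫ ω, i ω ∂μ + ∫ ω, β * h ω ∂μ ≤ β * ∫ ω, Xt e α t ω ∂μ := by
        rw [← integral_const_mul β, ← integral_add hinti (hinth.const_mul β)]
        refine integral_mono_ae (hinti.add (hinth.const_mul β))
          ((hXint t).const_mul β) ?_
        filter_upwards [hXbound] with ω hω
        by_cases hm : ω ∈ A
        · simp only [hi, hh, if_pos hm, mul_zero, add_zero]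
          nlinarith [(hω t).1]
        · simp only [hi, hh, if_neg hm, zero_add, le_refl]
      calc ∫ ω, Xt e α (t+1) ω ∂μ
          = ∫ ω, i ω ∂μ + ∫ ω, (h * e (t+1)) ω ∂μ := h3
        _ ≤ ∫ ω, i ω ∂μ + ∫ ω, β * h ω ∂μ := by
            have := h1 ▸ h2
            linarith
        _ ≤ β * ∫ ω, Xt e α t ω ∂μ := h4
        _ ≤ β * β ^ t := by nlinarith
        _ = β ^ (t+1) := by ring
  -- event inclusion: if the product crosses by T, the stopped process is large at T
  have hincl : {ω | ∃ t, 1 ≤ t ∧ t ≤ T ∧ 1/α ≤ ∏ j ∈ Finset.Icc 1 t, e j ω}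
      ⊆ {ω | 1/α ≤ Xt e α T ω} := by
    intro ω hω
    obtain ⟨t, ht1, htT, htc⟩ := hω
    have hex : ∃ s, 1 ≤ s ∧ s ≤ T ∧ 1/α ≤ Pr e s ω := ⟨t, ht1, htT, htc⟩
    set s := Nat.find hex with hs
    obtain ⟨hs1, hsT, hscross⟩ := Nat.find_spec hex
    have hmin : ∀ r, r < s → ¬(1 ≤ r ∧ r ≤ T ∧ 1/α ≤ Pr e r ω) :=
      fun r hr => Nat.find_min hex hr
    have hXs : Xt e α s ω = Pr e s ω := by
      unfold Xt Pr
      refine Finset.prod_congr rfl fun j hj => ?_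
      obtain ⟨hj1, hjs⟩ := Finset.mem_Icc.1 hj
      show (if ω ∈ St e α (j-1) then (1:ℝ) else e j ω) = e j ω
      rw [if_neg]
      intro hmem
      obtain ⟨r, hr1, hrj, hrc⟩ := hmem
      exact hmin r (by omega) ⟨hr1, by omega, hrc⟩
    have hstep : ∀ u, s ≤ u → u ≤ T → 1/α ≤ Xt e α u ω := by
      intro u hu
      induction u, hu using Nat.le_induction with
      | base => intro _; rw [hXs]; exact hscross
      | succ u hu ihu =>
        intro huT
        have hx : Xt e α (u+1) ω = Xt e α u ω * gg e α (u+1) ω := by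
          unfold Xt
          rw [Finset.prod_Icc_succ_top (by omega)]
        have hg1 : gg e α (u+1) ω = 1 := by
          show (if ω ∈ St e α (u+1-1) then (1:ℝ) else e (u+1) ω) = 1
          rw [if_pos]
          exact ⟨s, hs1, by omega, hscross⟩
        rw [hx, hg1, mul_one]
        exact ihu (by omega)
    exact hstep T hsT le_rfl
  -- Markov's inequality
  have hXTnn : 0 ≤ᵐ[μ] Xt e α T := hXbound.mono fun ω hω => (hω T).1
  have hmarkov := mul_meas_ge_le_integral_of_nonneg hXTnn (hXint T) (1/α)
  have hI : (1/α) * (μ {ω | 1/α ≤ Xt e α T ω}).toReal ≤ β ^ T :=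
    le_trans hmarkov (key T)
  calc μ {ω | ∃ t, 1 ≤ t ∧ t ≤ T ∧ 1/α ≤ ∏ j ∈ Finset.Icc 1 t, e j ω}
      ≤ μ {ω | 1/α ≤ Xt e α T ω} := measure_mono hincl
    _ ≤ ENNReal.ofReal (α * β ^ T) := by
        rw [ENNReal.le_ofReal_iff_toReal_le (measure_ne_top μ _) (by positivity)]
        set x := (μ {ω | 1/α ≤ Xt e α T ω}).toReal with hx
        have h5 := mul_le_mul_of_nonneg_left hI hα0.le
        rwa [← mul_assoc, mul_one_div_cancel hα0.ne', one_mul] at h5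
end
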